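/- arXiv:1912.06805 — 4 statements merged into one kernel-verified Lean document; each statement's English description precedes it below -/
import Mathlib

section
/- Let G : ℝⁿ → ℝ be convex differentiable and δᵢ > 0, H(x) = G(x) + Σᵢ δᵢ|xᵢ|. Define vectors β(x) and φ(x) componentwise: βᵢ(x) = ∇ᵢG(x)+δᵢ if xᵢ = 0 and ∇ᵢG(x)+δᵢ < 0; βᵢ(x) = ∇ᵢG(x)−δᵢ if xᵢ = 0 and ∇ᵢG(x)−δᵢ > 0; βᵢ(x) = 0 otherwise; φᵢ(x) = 0 if xᵢ = 0; φᵢ(x) = min{∇ᵢG(x)+δᵢ, max{xᵢ, ∇ᵢG(x)−δᵢ}} if xᵢ > 0; φᵢ(x) = max{∇ᵢG(x)−δᵢ, min{xᵢ, ∇ᵢG(x)+δᵢ}} if xᵢ < 0. Then if β(x̄) = 0 and φ(x̄) = 0, the point x̄ is a global minimizer of H. -/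
theorem grad_ineq' {n : ℕ} (G : EuclideanSpace ℝ (Fin n) → ℝ)
    (hG : ConvexOn ℝ Set.univ G) (x v : EuclideanSpace ℝ (Fin n)) (gx : EuclideanSpace ℝ (Fin n))
    (hg : HasGradientAt G gx x) :
    G x + ∑ i, gx i * v i ≤ G (x + v) := by
  set f : ℝ → ℝ := fun t => G (x + t • v) with hf
  have hc : HasDerivAt (fun t : ℝ => x + t • v) v 0 := by
    simpa using ((hasDerivAt_id (0:ℝ)).smul_const v).const_add x
  have hg' : HasFDerivAt G ((InnerProductSpace.toDual ℝ _) gx) (x + (0:ℝ) • v) := by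
    simpa using hg.hasFDerivAt
  have hfd : HasDerivAt f (∑ i, gx i * v i) 0 := by
    have := hg'.comp_hasDerivAt 0 hc
    have e : ((InnerProductSpace.toDual ℝ _) gx) v = ∑ i, gx i * v i := by
      simp [InnerProductSpace.toDual_apply_apply, PiLp.inner_apply, mul_comm]
    rw [e] at this
    exact this
  have hconv : ConvexOn ℝ Set.univ f := by
    have h2 := hG.comp_affineMap (AffineMap.lineMap x (x+v) : ℝ →ᵃ[ℝ] EuclideanSpace ℝ (Fin n))
    have : f = G ∘ (AffineMap.lineMap x (x+v) : ℝ →ᵃ[ℝ] EuclideanSpace ℝ (Fin n)) := by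
      funext t
      simp [hf, AffineMap.lineMap_apply, add_comm]
    rw [this]
    simpa using h2
  have key := hconv.le_slope_of_hasDerivAt (Set.mem_univ (0:ℝ)) (Set.mem_univ (1:ℝ)) one_pos hfd
  have : slope f 0 1 = G (x + v) - G x := by
    simp [slope, hf]
  rw [this] at key
  linarith

theorem beta_phi_zero_implies_minimizer {n : ℕ} (G : EuclideanSpace ℝ (Fin n) → ℝ)
    (g : EuclideanSpace ℝ (Fin n) → EuclideanSpace ℝ (Fin n))
    (δ : Fin n → ℝ) (hδ : ∀ i, 0 < δ i)
    (hG : ConvexOn ℝ Set.univ G)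
    (hg : ∀ x, HasGradientAt G (g x) x)
    (xb : EuclideanSpace ℝ (Fin n)) (β φ : Fin n → ℝ)
    (hβ : ∀ i, β i =
      if xb i = 0 ∧ g xb i + δ i < 0 then g xb i + δ i
      else if xb i = 0 ∧ g xb i - δ i > 0 then g xb i - δ i
      else 0)
    (hφ : ∀ i, φ i =
      if xb i = 0 then 0
      else if 0 < xb i then min (g xb i + δ i) (max (xb i) (g xb i - δ i))
      else max (g xb i - δ i) (min (xb i) (g xb i + δ i)))
    (hβ0 : ∀ i, β i = 0) (hφ0 : ∀ i, φ i = 0) :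
    ∀ y, G xb + ∑ i, δ i * |xb i| ≤ G y + ∑ i, δ i * |y i| := by
  intro y
  have hgi := grad_ineq' G hG xb (y - xb) (g xb) (hg xb)
  rw [add_sub_cancel] at hgi
  have hsub : ∀ i, (y - xb) i = y i - xb i := fun i => rfl
  have hterm : ∀ i : Fin n, δ i * |xb i| ≤ g xb i * (y i - xb i) + δ i * |y i| := by
    intro i
    rcases lt_trichotomy (xb i) 0 with hneg | h0 | hpos
    · -- g xb i = δ i
      have h := hφ0 i
      rw [hφ i, if_neg (ne_of_lt hneg), if_neg (not_lt.mpr (le_of_lt hneg))] at h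
      have hge : g xb i = δ i := by
        have hb : min (xb i) (g xb i + δ i) < 0 := lt_of_le_of_lt (min_le_left _ _) hneg
        rcases max_cases (g xb i - δ i) (min (xb i) (g xb i + δ i)) with ⟨h1, h2⟩ | ⟨h1, h2⟩ <;>
          linarith
      rw [hge, abs_of_neg hneg]
      nlinarith [neg_abs_le (y i), hδ i]
    · -- |g xb i| ≤ δ i
      have h := hβ0 i
      rw [hβ i] at h
      have h1 : ¬ (g xb i + δ i < 0) := by
        intro hc
        rw [if_pos ⟨h0, hc⟩] at h; linarith
      have h2 : ¬ (g xb i - δ i > 0) := by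
        intro hc
        rw [if_neg (by tauto), if_pos ⟨h0, hc⟩] at h; linarith
      push_neg at h1 h2
      rw [h0, abs_zero]
      rcases le_or_gt 0 (y i) with hy | hy
      · nlinarith [mul_nonneg hy h1, abs_of_nonneg hy]
      · nlinarith [mul_nonneg (neg_nonneg.mpr (le_of_lt hy)) (neg_nonneg.mpr h2), abs_of_neg hy]
    · -- g xb i = -δ i
      have h := hφ0 i
      rw [hφ i, if_neg (ne_of_gt hpos), if_pos hpos] at h
      have hge : g xb i = -δ i := by
        have hb : 0 < max (xb i) (g xb i - δ i) := lt_of_lt_of_le hpos (le_max_left _ _)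
        rcases min_cases (g xb i + δ i) (max (xb i) (g xb i - δ i)) with ⟨h1, h2⟩ | ⟨h1, h2⟩ <;>
          linarith
      rw [hge, abs_of_pos hpos]
      nlinarith [le_abs_self (y i), hδ i]
  have hsum : ∑ i, δ i * |xb i| ≤ ∑ i, (g xb i * (y i - xb i) + δ i * |y i|) :=
    Finset.sum_le_sum fun i _ => hterm i
  rw [Finset.sum_add_distrib] at hsum
  have : ∑ i, g xb i * (y - xb) i = ∑ i, g xb i * (y i - xb i) := by
    simp [hsub]
  rw [this] at hgi
  linarith
end

section
/- Under the setting of the previous item, suppose additionally x̂ minimizes Ĥ(x) = Ĝ(x) + Σᵢ δᵢ|xᵢ| with δᵢ > 0, and let θ₂ = (1/2) min over {i : x̂ᵢ = 0} of (δᵢ − |∇ᵢĜ(x̂)|), assumed strictly positive (nondegeneracy). If ‖xᵏ − x̂‖ ≤ θ₂/(2L̂) and ‖sᵏ − ŝ‖ ≤ θ₂/(2λ‖M‖), then |∇ᵢGᵏ(xᵏ)| ≤ δᵢ − θ₂ for every i with x̂ᵢ = 0. -/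
set_option maxHeartbeats 1000000 in
theorem grad_bound_on_zero_indices {n m : ℕ} (F : EuclideanSpace ℝ (Fin n) → ℝ)
    (gF : EuclideanSpace ℝ (Fin n) → EuclideanSpace ℝ (Fin n))
    (L lam : ℝ) (hlam : 0 < lam)
    (M : EuclideanSpace ℝ (Fin n) →L[ℝ] EuclideanSpace ℝ (Fin m))
    (shat sk : EuclideanSpace ℝ (Fin m))
    (hF : ∀ x, HasGradientAt F (gF x) x)
    (hLip : ∀ x y, ‖gF x - gF y‖ ≤ L * ‖x - y‖)
    (gGhat gGk : EuclideanSpace ℝ (Fin n) → EuclideanSpace ℝ (Fin n))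
    (hgGhat : ∀ x, gGhat x = gF x + lam • (ContinuousLinearMap.adjoint M) (M x - shat))
    (hgGk : ∀ x, gGk x = gF x + lam • (ContinuousLinearMap.adjoint M) (M x - sk))
    (δ : Fin n → ℝ) (hδ : ∀ i, 0 < δ i)
    (xhat : EuclideanSpace ℝ (Fin n))
    (hmin : ∀ y, F xhat + (lam / 2) * ‖M xhat - shat‖ ^ 2 + ∑ i, δ i * |xhat i| ≤
                 F y + (lam / 2) * ‖M y - shat‖ ^ 2 + ∑ i, δ i * |y i|)
    (θ₂ : ℝ)
    (hθ₂ : θ₂ = (1 / 2) * sInf {t : ℝ | ∃ i, xhat i = 0 ∧ t = δ i - |gGhat xhat i|})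
    (hθ₂pos : 0 < θ₂)
    (xk : EuclideanSpace ℝ (Fin n))
    (hxk : ‖xk - xhat‖ ≤ θ₂ / (2 * (L + lam * ‖M‖ ^ 2)))
    (hsk : ‖sk - shat‖ ≤ θ₂ / (2 * lam * ‖M‖)) :
    ∀ i, xhat i = 0 → |gGk xk i| ≤ δ i - θ₂ := by
  intro i hi
  -- L is nonnegative
  have hL : 0 ≤ L := by
    have h1 := hLip (EuclideanSpace.single i (1:ℝ)) 0
    rw [sub_zero, EuclideanSpace.norm_single] at h1
    have := norm_nonneg (gF (EuclideanSpace.single i (1:ℝ)) - gF 0)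
    simpa using le_trans this h1
  have hMn : (0:ℝ) ≤ ‖M‖ := norm_nonneg M
  -- the set is finite, nonempty, and contains our element
  set S : Set ℝ := {t : ℝ | ∃ i, xhat i = 0 ∧ t = δ i - |gGhat xhat i|} with hS
  have hmem : (δ i - |gGhat xhat i|) ∈ S := ⟨i, hi, rfl⟩
  have hfin : S.Finite := by
    have : S ⊆ (fun j => δ j - |gGhat xhat j|) '' Set.univ := by
      rintro t ⟨j, _, rfl⟩; exact ⟨j, trivial, rfl⟩
    exact Set.Finite.subset ((Set.finite_univ).image _) this
  have hbdd : BddBelow S := hfin.bddBelow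
  have hinf : 2 * θ₂ ≤ δ i - |gGhat xhat i| := by
    have := csInf_le hbdd hmem
    rw [hθ₂]; linarith
  -- norm difference bound
  have hkey : ‖gGk xk - gGhat xhat‖ ≤
      (L + lam * ‖M‖ ^ 2) * ‖xk - xhat‖ + lam * ‖M‖ * ‖sk - shat‖ := by
    have hd : gGk xk - gGhat xhat = (gF xk - gF xhat)
        + lam • (ContinuousLinearMap.adjoint M) (M (xk - xhat))
        + lam • (ContinuousLinearMap.adjoint M) (shat - sk) := by
      rw [hgGk, hgGhat]
      simp only [map_sub]
      module
    rw [hd]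
    have hadj : ‖(ContinuousLinearMap.adjoint M : _)‖ = ‖M‖ :=
      LinearIsometryEquiv.norm_map ContinuousLinearMap.adjoint M
    calc ‖(gF xk - gF xhat) + lam • (ContinuousLinearMap.adjoint M) (M (xk - xhat))
            + lam • (ContinuousLinearMap.adjoint M) (shat - sk)‖
        ≤ ‖(gF xk - gF xhat) + lam • (ContinuousLinearMap.adjoint M) (M (xk - xhat))‖
          + ‖lam • (ContinuousLinearMap.adjoint M) (shat - sk)‖ := norm_add_le _ _
      _ ≤ ‖gF xk - gF xhat‖ + ‖lam • (ContinuousLinearMap.adjoint M) (M (xk - xhat))‖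
          + ‖lam • (ContinuousLinearMap.adjoint M) (shat - sk)‖ := by
          have := norm_add_le (gF xk - gF xhat)
            (lam • (ContinuousLinearMap.adjoint M) (M (xk - xhat)))
          linarith
      _ ≤ (L + lam * ‖M‖ ^ 2) * ‖xk - xhat‖ + lam * ‖M‖ * ‖sk - shat‖ := by
          have h1 := hLip xk xhat
          have h2 : ‖lam • (ContinuousLinearMap.adjoint M) (M (xk - xhat))‖
              ≤ lam * (‖M‖ * (‖M‖ * ‖xk - xhat‖)) := by
            rw [norm_smul, Real.norm_eq_abs, abs_of_pos hlam]
            have := (ContinuousLinearMap.adjoint M).le_opNorm (M (xk - xhat))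
            have h3 := M.le_opNorm (xk - xhat)
            have h4 : ‖(ContinuousLinearMap.adjoint M) (M (xk - xhat))‖
                ≤ ‖M‖ * (‖M‖ * ‖xk - xhat‖) := by
              calc ‖(ContinuousLinearMap.adjoint M) (M (xk - xhat))‖
                  ≤ ‖(ContinuousLinearMap.adjoint M : _)‖ * ‖M (xk - xhat)‖ := this
                _ ≤ ‖M‖ * (‖M‖ * ‖xk - xhat‖) := by
                    rw [hadj]; exact mul_le_mul_of_nonneg_left h3 hMn
            nlinarith [hlam.le]
          have h5 : ‖lam • (ContinuousLinearMap.adjoint M) (shat - sk)‖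
              ≤ lam * ‖M‖ * ‖sk - shat‖ := by
            rw [norm_smul, Real.norm_eq_abs, abs_of_pos hlam, mul_assoc]
            refine mul_le_mul_of_nonneg_left ?_ hlam.le
            calc ‖(ContinuousLinearMap.adjoint M) (shat - sk)‖
                ≤ ‖(ContinuousLinearMap.adjoint M : _)‖ * ‖shat - sk‖ :=
                  (ContinuousLinearMap.adjoint M).le_opNorm _
              _ = ‖M‖ * ‖sk - shat‖ := by rw [hadj, norm_sub_rev]
          nlinarith
  -- total bound θ₂
  have hLhat : 0 ≤ L + lam * ‖M‖ ^ 2 := by positivity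
  have hb1 : (L + lam * ‖M‖ ^ 2) * ‖xk - xhat‖ ≤ θ₂ / 2 := by
    rcases eq_or_lt_of_le hLhat with h | h
    · rw [← h, zero_mul]; positivity
    · have := mul_le_mul_of_nonneg_left hxk (le_of_lt h)
      calc (L + lam * ‖M‖ ^ 2) * ‖xk - xhat‖
          ≤ (L + lam * ‖M‖ ^ 2) * (θ₂ / (2 * (L + lam * ‖M‖ ^ 2))) := this
        _ = θ₂ / 2 := by
            rw [mul_div_assoc']
            rw [div_eq_div_iff (by positivity) (by norm_num)]
            ring
  have hb2 : lam * ‖M‖ * ‖sk - shat‖ ≤ θ₂ / 2 := by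
    rcases eq_or_lt_of_le hMn with h | h
    · rw [← h]; simp; positivity
    · have hpos : 0 < lam * ‖M‖ := by positivity
      have := mul_le_mul_of_nonneg_left hsk hpos.le
      calc lam * ‖M‖ * ‖sk - shat‖ ≤ lam * ‖M‖ * (θ₂ / (2 * lam * ‖M‖)) := this
        _ = θ₂ / 2 := by field_simp
  have hnrm : ‖gGk xk - gGhat xhat‖ ≤ θ₂ := by linarith
  have hcoord : |gGk xk i - gGhat xhat i| ≤ ‖gGk xk - gGhat xhat‖ := by
    have h2 : |(gGk xk - gGhat xhat) i| ≤ ‖gGk xk - gGhat xhat‖ := by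
      rw [EuclideanSpace.norm_eq]
      have hsum := Finset.single_le_sum
        (f := fun j => ‖(gGk xk - gGhat xhat) j‖ ^ 2)
        (fun j _ => sq_nonneg _) (Finset.mem_univ i)
      have heq : |(gGk xk - gGhat xhat) i|
          = Real.sqrt (‖(gGk xk - gGhat xhat) i‖ ^ 2) := by
        rw [Real.sqrt_sq (norm_nonneg _), Real.norm_eq_abs]
      rw [heq]
      exact Real.sqrt_le_sqrt hsum
    simpa using h2
  calc |gGk xk i| ≤ |gGhat xhat i| + |gGk xk i - gGhat xhat i| := by
        have := abs_sub_abs_le_abs_sub (gGk xk i) (gGhat xhat i); linarith [abs_nonneg (gGk xk i - gGhat xhat i)]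
    _ ≤ (δ i - 2 * θ₂) + θ₂ := by
        have := le_trans hcoord hnrm; linarith
    _ ≤ δ i - θ₂ := by linarith
end

section
/- Under the same hypotheses (‖xᵏ − x̂‖ ≤ min{θ₁/2, θ₂/(2L̂)} and ‖sᵏ − ŝ‖ ≤ θ₂/(2λ‖M‖)), the vector βᵏ(xᵏ) of optimality violations of the zero variables vanishes: βᵏ(xᵏ) = 0, where βᵏᵢ(x) = ∇ᵢGᵏ(x)+δᵢ if xᵢ=0 and ∇ᵢGᵏ(x)+δᵢ<0, βᵏᵢ(x) = ∇ᵢGᵏ(x)−δᵢ if xᵢ=0 and ∇ᵢGᵏ(x)−δᵢ>0, and 0 otherwise. -/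
lemma euclid_abs_coord_le_norm {n : ℕ} (v : EuclideanSpace ℝ (Fin n)) (i : Fin n) :
    |v i| ≤ ‖v‖ := by
  rw [EuclideanSpace.norm_eq]
  have h1 : |v i| = Real.sqrt (‖v i‖ ^ 2) := by
    rw [Real.sqrt_sq (norm_nonneg _)]; simp [Real.norm_eq_abs]
  rw [h1]
  apply Real.sqrt_le_sqrt
  exact Finset.single_le_sum (f := fun j => ‖v j‖ ^ 2) (fun j _ => by positivity)
    (Finset.mem_univ i)

set_option maxHeartbeats 1000000 in
theorem beta_vanishes_near_solution {n m : ℕ} (F : EuclideanSpace ℝ (Fin n) → ℝ)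
    (gF : EuclideanSpace ℝ (Fin n) → EuclideanSpace ℝ (Fin n))
    (L lam : ℝ) (hlam : 0 < lam)
    (M : EuclideanSpace ℝ (Fin n) →L[ℝ] EuclideanSpace ℝ (Fin m))
    (shat sk : EuclideanSpace ℝ (Fin m))
    (hF : ∀ x, HasGradientAt F (gF x) x)
    (hLip : ∀ x y, ‖gF x - gF y‖ ≤ L * ‖x - y‖)
    (gGhat gGk : EuclideanSpace ℝ (Fin n) → EuclideanSpace ℝ (Fin n))
    (hgGhat : ∀ x, gGhat x = gF x + lam • (ContinuousLinearMap.adjoint M) (M x - shat))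
    (hgGk : ∀ x, gGk x = gF x + lam • (ContinuousLinearMap.adjoint M) (M x - sk))
    (δ : Fin n → ℝ) (hδ : ∀ i, 0 < δ i)
    (xhat : EuclideanSpace ℝ (Fin n)) (hne : xhat ≠ 0)
    (hmin : ∀ y, F xhat + (lam / 2) * ‖M xhat - shat‖ ^ 2 + ∑ i, δ i * |xhat i| ≤
                 F y + (lam / 2) * ‖M y - shat‖ ^ 2 + ∑ i, δ i * |y i|)
    (θ₁ θ₂ : ℝ)
    (hθ₁ : θ₁ = (1 / 2) * sInf {t : ℝ | ∃ i, xhat i ≠ 0 ∧ t = |xhat i|})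
    (hθ₂ : θ₂ = (1 / 2) * sInf {t : ℝ | ∃ i, xhat i = 0 ∧ t = δ i - |gGhat xhat i|})
    (hθ₂pos : 0 < θ₂)
    (xk : EuclideanSpace ℝ (Fin n))
    (hxk : ‖xk - xhat‖ ≤ min (θ₁ / 2) (θ₂ / (2 * (L + lam * ‖M‖ ^ 2))))
    (hsk : ‖sk - shat‖ ≤ θ₂ / (2 * lam * ‖M‖))
    (β : Fin n → ℝ)
    (hβ : ∀ i, β i =
      if xk i = 0 ∧ gGk xk i + δ i < 0 then gGk xk i + δ i
      else if xk i = 0 ∧ gGk xk i - δ i > 0 then gGk xk i - δ i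
      else 0) :
    ∀ i, β i = 0 := by
  set vB := (ContinuousLinearMap.adjoint M) (M (xk - xhat)) with hvB
  set vC := (ContinuousLinearMap.adjoint M) (shat - sk) with hvC
  intro i
  rw [hβ i]
  by_cases hx0 : xk i = 0
  · -- main case
    have hΔ1 : ‖xk - xhat‖ ≤ θ₁ / 2 := le_trans hxk (min_le_left _ _)
    have hΔ2 : ‖xk - xhat‖ ≤ θ₂ / (2 * (L + lam * ‖M‖ ^ 2)) :=
      le_trans hxk (min_le_right _ _)
    have hcoordi : |xk i - xhat i| ≤ ‖xk - xhat‖ := by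
      have := euclid_abs_coord_le_norm (xk - xhat) i
      simpa using this
    -- Step 1: xhat i = 0
    have hxhat0 : xhat i = 0 := by
      by_contra hh
      have hmem : |xhat i| ∈ {t : ℝ | ∃ j, xhat j ≠ 0 ∧ t = |xhat j|} := ⟨i, hh, rfl⟩
      have hbdd : BddBelow {t : ℝ | ∃ j, xhat j ≠ 0 ∧ t = |xhat j|} := by
        have hfin : {t : ℝ | ∃ j, xhat j ≠ 0 ∧ t = |xhat j|}.Finite := by
          have : {t : ℝ | ∃ j, xhat j ≠ 0 ∧ t = |xhat j|} ⊆
              Set.range (fun j : Fin n => |xhat j|) := by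
            rintro t ⟨j, _, rfl⟩; exact ⟨j, rfl⟩
          exact (Set.finite_range _).subset this
        exact hfin.bddBelow
      have hle : sInf {t : ℝ | ∃ j, xhat j ≠ 0 ∧ t = |xhat j|} ≤ |xhat i| :=
        csInf_le hbdd hmem
      have h2θ : 2 * θ₁ ≤ |xhat i| := by rw [hθ₁]; linarith
      have habs : |xhat i| ≤ θ₁ / 2 := by
        have : |xk i - xhat i| = |xhat i| := by rw [hx0]; simp
        linarith [hcoordi, hΔ1, this.symm.le, this.le]
      have hpos : 0 < |xhat i| := abs_pos.mpr hh
      linarith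
    -- Step 2: 2θ₂ ≤ δ i - |gGhat xhat i|
    have h2θ₂ : 2 * θ₂ ≤ δ i - |gGhat xhat i| := by
      have hmem : δ i - |gGhat xhat i| ∈
          {t : ℝ | ∃ j, xhat j = 0 ∧ t = δ j - |gGhat xhat j|} := ⟨i, hxhat0, rfl⟩
      have hbdd : BddBelow {t : ℝ | ∃ j, xhat j = 0 ∧ t = δ j - |gGhat xhat j|} := by
        have hfin : {t : ℝ | ∃ j, xhat j = 0 ∧ t = δ j - |gGhat xhat j|}.Finite := by
          have : {t : ℝ | ∃ j, xhat j = 0 ∧ t = δ j - |gGhat xhat j|} ⊆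
              Set.range (fun j : Fin n => δ j - |gGhat xhat j|) := by
            rintro t ⟨j, _, rfl⟩; exact ⟨j, rfl⟩
          exact (Set.finite_range _).subset this
        exact hfin.bddBelow
      have hle := csInf_le hbdd hmem
      rw [hθ₂]; linarith
    -- Step 3: ‖gGk xk - gGhat xhat‖ ≤ θ₂
    have hadj : ‖ContinuousLinearMap.adjoint M‖ = ‖M‖ := by
      exact LinearIsometryEquiv.norm_map (ContinuousLinearMap.adjoint) M
    have hv : gGk xk - gGhat xhat = (gF xk - gF xhat)
        + lam • ((ContinuousLinearMap.adjoint M) (M (xk - xhat)))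
        + lam • ((ContinuousLinearMap.adjoint M) (shat - sk)) := by
      rw [hgGk, hgGhat]
      simp only [map_sub]
      module
    have hA : L * ‖xk - xhat‖ + lam * ‖M‖ ^ 2 * ‖xk - xhat‖ ≤ θ₂ / 2 := by
      rcases le_or_gt (L + lam * ‖M‖ ^ 2) 0 with hL | hL
      · nlinarith [norm_nonneg (xk - xhat)]
      · rw [le_div_iff₀ (by positivity)] at hΔ2
        nlinarith
    have hB : lam * (‖M‖ * ‖shat - sk‖) ≤ θ₂ / 2 := by
      rcases eq_or_lt_of_le (norm_nonneg M) with hM | hM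
      · rw [← hM]; simp; linarith
      · rw [le_div_iff₀ (by positivity)] at hsk
        rw [norm_sub_rev shat sk]
        nlinarith [norm_nonneg (sk - shat)]
    have hnorm : ‖gGk xk - gGhat xhat‖ ≤ θ₂ := by
      have t1 : ‖gF xk - gF xhat‖ ≤ L * ‖xk - xhat‖ := hLip xk xhat
      have hBn : ‖(ContinuousLinearMap.adjoint M) (M (xk - xhat))‖ ≤
          ‖M‖ * (‖M‖ * ‖xk - xhat‖) := by
        calc ‖(ContinuousLinearMap.adjoint M) (M (xk - xhat))‖
            ≤ ‖ContinuousLinearMap.adjoint M‖ * ‖M (xk - xhat)‖ :=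
              (ContinuousLinearMap.adjoint M).le_opNorm _
          _ ≤ ‖M‖ * (‖M‖ * ‖xk - xhat‖) := by
              rw [hadj]
              exact mul_le_mul_of_nonneg_left (M.le_opNorm _) (norm_nonneg M)
      have hCn : ‖(ContinuousLinearMap.adjoint M) (shat - sk)‖ ≤ ‖M‖ * ‖shat - sk‖ := by
        calc ‖(ContinuousLinearMap.adjoint M) (shat - sk)‖
            ≤ ‖ContinuousLinearMap.adjoint M‖ * ‖shat - sk‖ :=
              (ContinuousLinearMap.adjoint M).le_opNorm _
          _ = ‖M‖ * ‖shat - sk‖ := by rw [hadj]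
      have t2 : ‖lam • ((ContinuousLinearMap.adjoint M) (M (xk - xhat)))‖ ≤
          lam * (‖M‖ * (‖M‖ * ‖xk - xhat‖)) := by
        rw [norm_smul, Real.norm_eq_abs, abs_of_pos hlam]
        exact mul_le_mul_of_nonneg_left hBn hlam.le
      have t3 : ‖lam • ((ContinuousLinearMap.adjoint M) (shat - sk))‖ ≤
          lam * (‖M‖ * ‖shat - sk‖) := by
        rw [norm_smul, Real.norm_eq_abs, abs_of_pos hlam]
        exact mul_le_mul_of_nonneg_left hCn hlam.le
      have tri : ‖gGk xk - gGhat xhat‖ ≤ ‖gF xk - gF xhat‖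
          + ‖lam • ((ContinuousLinearMap.adjoint M) (M (xk - xhat)))‖
          + ‖lam • ((ContinuousLinearMap.adjoint M) (shat - sk))‖ := by
        rw [hv]; exact norm_add₃_le
      nlinarith
    -- Step 4: |gGk xk i| ≤ δ i - θ₂
    have hcoord2 : |gGk xk i - gGhat xhat i| ≤ θ₂ := by
      have := euclid_abs_coord_le_norm (gGk xk - gGhat xhat) i
      simp only [PiLp.sub_apply] at this
      linarith
    have hfinal : |gGk xk i| ≤ δ i - θ₂ := by
      have := abs_sub_abs_le_abs_sub (gGk xk i) (gGhat xhat i)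
      linarith
    rw [abs_le] at hfinal
    have h1 : ¬ (gGk xk i + δ i < 0) := by push_neg; linarith [hfinal.1]
    have h2 : ¬ (gGk xk i - δ i > 0) := by push_neg; linarith [hfinal.2]
    simp [h1, h2]
  · simp [hx0]
end

section
/- In the exact Bregman iteration for min K(x) subject to Mx = s, defined by x^{k+1} = argmin_x K(x) + (λ/2)‖Mx − sᵏ‖² and s^{k+1} = sᵏ + s − Mx^{k+1}, the constraint violation is monotonically nonincreasing: ‖Mx^{k+1} − s‖ ≤ ‖Mxᵏ − s‖ for all k. -/
open RealInnerProductSpace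

/-- First-order optimality condition for an exact minimizer of
`K y + (lam/2) * ‖M y - c‖²` with `K` convex. -/
lemma bregman_first_order {n m : ℕ}
    (K : EuclideanSpace ℝ (Fin n) → ℝ) (hK : ConvexOn ℝ Set.univ K)
    (M : EuclideanSpace ℝ (Fin n) →L[ℝ] EuclideanSpace ℝ (Fin m))
    (c : EuclideanSpace ℝ (Fin m)) (lam : ℝ) (hlam : 0 < lam)
    (x0 : EuclideanSpace ℝ (Fin n))
    (hmin : ∀ y, K x0 + (lam / 2) * ‖M x0 - c‖ ^ 2 ≤ K y + (lam / 2) * ‖M y - c‖ ^ 2)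
    (y : EuclideanSpace ℝ (Fin n)) :
    0 ≤ K y - K x0 + lam * ⟪M x0 - c, M y - M x0⟫ := by
  set w := M x0 - c with hw
  set d := M y - M x0 with hd
  set A := K y - K x0 + lam * ⟪w, d⟫ with hA
  set B := lam / 2 * ‖d‖ ^ 2 with hB
  have hB0 : 0 ≤ B := by positivity
  have key : ∀ t : ℝ, 0 < t → t ≤ 1 → 0 ≤ A + t * B := by
    intro t ht ht1
    have hz := hmin (x0 + t • (y - x0))
    have hconv : K (x0 + t • (y - x0)) ≤ (1 - t) * K x0 + t * K y := by
      have h := hK.2 (Set.mem_univ x0) (Set.mem_univ y)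
        (by linarith : (0:ℝ) ≤ 1 - t) ht.le (by ring)
      have hz' : (1 - t) • x0 + t • y = x0 + t • (y - x0) := by
        rw [smul_sub, sub_smul, one_smul]; abel
      rwa [hz'] at h
    have hMz : M (x0 + t • (y - x0)) - c = w + t • d := by
      rw [hw, hd, map_add, map_smul, map_sub, smul_sub]
      abel
    have hnorm : ‖w + t • d‖ ^ 2 = ‖w‖ ^ 2 + 2 * (t * ⟪w, d⟫) + t ^ 2 * ‖d‖ ^ 2 := by
      rw [norm_add_sq_real, real_inner_smul_right, norm_smul]
      rw [mul_pow]
      simp [abs_of_pos ht]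
    rw [hMz, hnorm] at hz
    have h1 : 0 ≤ t * (A + t * B) := by nlinarith [hconv, hz]
    nlinarith [h1, ht]
  by_contra h
  push_neg at h
  rcases eq_or_lt_of_le hB0 with hB1 | hB1
  · have := key 1 one_pos le_rfl
    rw [← hB1] at this
    linarith
  · have htpos : 0 < min 1 (-A / (2 * B)) :=
      lt_min one_pos (div_pos (by linarith) (by linarith))
    have ht1 : min 1 (-A / (2 * B)) ≤ 1 := min_le_left _ _
    have hk := key _ htpos ht1
    have h2 : min 1 (-A / (2 * B)) * B ≤ (-A / (2 * B)) * B :=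
      mul_le_mul_of_nonneg_right (min_le_right _ _) hB0
    have h3 : (-A / (2 * B)) * B = -A / 2 := by
      field_simp
    rw [h3] at h2
    linarith

theorem bregman_constraint_violation_nonincreasing {n m : ℕ}
    (K : EuclideanSpace ℝ (Fin n) → ℝ)
    (hK : ConvexOn ℝ Set.univ K) (hKlsc : LowerSemicontinuous K)
    (M : EuclideanSpace ℝ (Fin n) →L[ℝ] EuclideanSpace ℝ (Fin m))
    (s : EuclideanSpace ℝ (Fin m)) (lam : ℝ) (hlam : 0 < lam)
    (x : ℕ → EuclideanSpace ℝ (Fin n))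
    (sSeq : ℕ → EuclideanSpace ℝ (Fin m))
    (hmin : ∀ k, ∀ y, K (x (k + 1)) + (lam / 2) * ‖M (x (k + 1)) - sSeq k‖ ^ 2 ≤
                      K y + (lam / 2) * ‖M y - sSeq k‖ ^ 2)
    (hupd : ∀ k, sSeq (k + 1) = sSeq k + s - M (x (k + 1))) :
    ∀ k, ‖M (x (k + 2)) - s‖ ≤ ‖M (x (k + 1)) - s‖ := by
  intro k
  set u := M (x (k + 1)) - s with hu
  set v := M (x (k + 2)) - s with hv
  set w := M (x (k + 1)) - sSeq k with hw
  have h1 := bregman_first_order K hK M (sSeq k) lam hlam (x (k + 1)) (hmin k) (x (k + 2))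
  have h2 := bregman_first_order K hK M (sSeq (k + 1)) lam hlam (x (k + 2))
    (hmin (k + 1)) (x (k + 1))
  have e1 : M (x (k + 2)) - M (x (k + 1)) = v - u := by
    rw [hv, hu]; abel
  have e2 : M (x (k + 2)) - sSeq (k + 1) = v + w := by
    rw [hupd k, hv, hw]; abel
  have e3 : M (x (k + 1)) - M (x (k + 2)) = u - v := by
    rw [hv, hu]; abel
  rw [e1] at h1
  rw [e2, e3] at h2
  have hinner : ⟪w, v - u⟫ + ⟪v + w, u - v⟫ = ⟪v, u⟫ - ⟪v, v⟫ := by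
    simp [inner_add_left, inner_sub_right]
    ring
  have hvv : ⟪v, v⟫ ≤ ⟪v, u⟫ := by nlinarith [h1, h2, hinner, hlam]
  have hcs : ⟪v, u⟫ ≤ ‖v‖ * ‖u‖ := real_inner_le_norm v u
  have hself : ⟪v, v⟫ = ‖v‖ ^ 2 := real_inner_self_eq_norm_sq v
  nlinarith [norm_nonneg v, norm_nonneg u, hvv, hcs, hself]
end
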